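/- If there exists (ρ̂, F̂) ∈ 𝒞_{N,𝒯} with B_{N,𝒯}(ρ̂, F̂) < +∞, then the infimum of B_{N,𝒯} over 𝒞_{N,𝒯} is attained, i.e. there exists (ρ*, F*) ∈ 𝒞_{N,𝒯} with B_{N,𝒯}(ρ*, F*) = inf{B_{N,𝒯}(ρ,F) : (ρ,F) ∈ 𝒞_{N,𝒯}} < +∞. -/

import Mathlib

open scoped BigOperators ENNReal RealInnerProductSpace
open Finset

namespace OTFV

/-- The Benamou–Brenier action density for a scalar flux value. -/
noncomputable def Bact (p q : ℝ) : ℝ≥0∞ :=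
  if 0 < p then ENNReal.ofReal (q ^ 2 / (2 * p))
  else if p = 0 ∧ q = 0 then 0 else ⊤

/-- Combinatorial/metric data of an admissible TPFA mesh: cells `T`, internal
edges `E`; an edge `σ` joins the two distinct cells `e1 σ` and `e2 σ`. -/
structure Mesh (T E : Type*) where
  e1 : E → T
  e2 : E → T
  ne : ∀ σ, e1 σ ≠ e2 σ
  m : T → ℝ
  m_pos : ∀ K, 0 < m K
  mS : E → ℝ
  mS_pos : ∀ σ, 0 < mS σ
  dS : E → ℝ
  dS_pos : ∀ σ, 0 < dS σ
  d1 : E → ℝ   -- d_{K,σ} for K = e1 σ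
  d2 : E → ℝ   -- d_{L,σ} for L = e2 σ
  d1_pos : ∀ σ, 0 < d1 σ
  d2_pos : ∀ σ, 0 < d2 σ
  d_sum : ∀ σ, d1 σ + d2 σ = dS σ

variable {T T' E : Type*}

/-- A conservative flux is encoded by its value `F σ = F_{K,σ}` on the side `K = e1 σ`
(so that `F_{L,σ} = -F σ` for `L = e2 σ`).  Discrete divergence. -/
noncomputable def divT [Fintype E] [DecidableEq T] (M : Mesh T E) (F : E → ℝ) (K : T) : ℝ :=
  (∑ σ, ((if M.e1 σ = K then F σ else 0) + (if M.e2 σ = K then -F σ else 0)) * M.mS σ) / M.m K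

/-- Discrete gradient, oriented from `e1 σ` to `e2 σ` (the `(K,σ)` component, `K = e1 σ`). -/
noncomputable def gradS (M : Mesh T E) (a : T → ℝ) (σ : E) : ℝ :=
  (a (M.e2 σ) - a (M.e1 σ)) / M.dS σ

/-- Linear (weighted arithmetic mean) reconstruction on edges. -/
noncomputable def linRec (M : Mesh T E) (a : T → ℝ) (σ : E) : ℝ :=
  (M.d1 σ / M.dS σ) * a (M.e1 σ) + (M.d2 σ / M.dS σ) * a (M.e2 σ)

/-- Injection from coarse densities to fine densities, `p` maps a fine cell to its coarse cell. -/
def inj (p : T → T') (ρ : T' → ℝ) : T → ℝ := fun K => ρ (p K)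

/-- Mass of a coarse cell. -/
noncomputable def coarseM [Fintype T] [DecidableEq T'] (M : Mesh T E) (p : T → T') (K' : T') : ℝ :=
  ∑ K ∈ Finset.univ.filter (fun K => p K = K'), M.m K

/-- Adjoint of the injection. -/
noncomputable def injAdj [Fintype T] [DecidableEq T'] (M : Mesh T E) (p : T → T')
    (a : T → ℝ) (K' : T') : ℝ :=
  (∑ K ∈ Finset.univ.filter (fun K => p K = K'), a K * M.m K) / coarseM M p K'

/-- Adjoint of the linear reconstruction, `(L_Σ^* u)_K = Σ_{σ∈Σ_K} u_σ m_σ d_{K,σ}/m_K`. -/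
noncomputable def linRecAdj [Fintype E] [DecidableEq T] (M : Mesh T E) (u : E → ℝ) (K : T) : ℝ :=
  (∑ σ, ((if M.e1 σ = K then u σ * M.mS σ * M.d1 σ else 0) +
          (if M.e2 σ = K then u σ * M.mS σ * M.d2 σ else 0))) / M.m K

/-- `R_{𝒯'} = 𝕀^* ∘ L_Σ^*`. -/
noncomputable def coarseRec [Fintype T] [Fintype E] [DecidableEq T] [DecidableEq T']
    (M : Mesh T E) (p : T → T') (u : E → ℝ) (K' : T') : ℝ :=
  injAdj M p (linRecAdj M u) K'

/-- Weighted scalar product on the coarse space. -/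
noncomputable def iprodC [Fintype T] [Fintype T'] [DecidableEq T'] (M : Mesh T E) (p : T → T')
    (a b : T' → ℝ) : ℝ :=
  ∑ K', a K' * b K' * coarseM M p K'

/-- The discrete Benamou–Brenier functional `B_{N,𝒯}`; the time step is `τ = 1/(N+1)`,
`ρ k.succ` stands for `ρ^k` and `ρ k.castSucc` for `ρ^{k-1}`, `k = 1, …, N+1`. -/
noncomputable def Benergy [Fintype E] [Fintype T'] (M : Mesh T E) (p : T → T') (N : ℕ)
    (ρ : Fin (N+2) → T' → ℝ) (F : Fin (N+1) → E → ℝ) : ℝ≥0∞ :=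
  if ∀ k K', 0 ≤ ρ k K' then
    ∑ k : Fin (N+1),
      ENNReal.ofReal ((1:ℝ)/(N+1)) *
        ∑ σ, Bact (linRec M (inj p (fun K' => (ρ k.succ K' + ρ k.castSucc K') / 2)) σ) (F k σ) *
          ENNReal.ofReal (M.mS σ * M.dS σ)
  else ⊤

/-- The discrete continuity equation. -/
def ContEq [Fintype E] [DecidableEq T] (M : Mesh T E) (p : T → T') (N : ℕ)
    (ρ : Fin (N+2) → T' → ℝ) (F : Fin (N+1) → E → ℝ) : Prop :=
  ∀ (k : Fin (N+1)) (K : T),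
    (ρ k.succ (p K) - ρ k.castSucc (p K)) / ((1:ℝ)/(N+1)) + divT M (F k) K = 0

/-- The constraint set `𝒞_{N,𝒯}`. -/
def Cset [Fintype E] [DecidableEq T] (M : Mesh T E) (p : T → T') (N : ℕ)
    (ρin ρf : T' → ℝ) : Set ((Fin (N+2) → T' → ℝ) × (Fin (N+1) → E → ℝ)) :=
  {x | x.1 0 = ρin ∧ x.1 (Fin.last (N+1)) = ρf ∧ ContEq M p N x.1 x.2}

/-- The (halved, squared) discrete Wasserstein distance: `W² = 2 inf B`. -/
noncomputable def Wdist2 [Fintype E] [Fintype T'] [DecidableEq T] (M : Mesh T E) (p : T → T')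
    (N : ℕ) (ρin ρf : T' → ℝ) : ℝ≥0∞ :=
  2 * ⨅ (x : (Fin (N+2) → T' → ℝ) × (Fin (N+1) → E → ℝ)) (_ : x ∈ Cset M p N ρin ρf),
    Benergy M p N x.1 x.2

/-- Logarithmic barrier. -/
noncomputable def Jlog (x : ℝ) : EReal := if 0 < x then ((- Real.log x : ℝ) : EReal) else ⊤

/-- The barrier functional `J_{N,𝒯}` (only the interior times `k = 1, …, N`). -/
noncomputable def Jbar [Fintype T] [Fintype T'] [DecidableEq T'] (M : Mesh T E) (p : T → T')
    (N : ℕ) (ρ : Fin (N+2) → T' → ℝ) : EReal :=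
  ∑ k : Fin N, (((1:ℝ)/(N+1) : ℝ) : EReal) *
    ∑ K', Jlog (ρ (k.succ.castSucc) K') * ((coarseM M p K' : ℝ) : EReal)

/-- Perturbed objective `B_{N,𝒯} + μ J_{N,𝒯}`, with values in `EReal`. -/
noncomputable def Pobj [Fintype T] [Fintype T'] [Fintype E] [DecidableEq T'] (M : Mesh T E)
    (p : T → T') (N : ℕ) (μ : ℝ) (ρ : Fin (N+2) → T' → ℝ) (F : Fin (N+1) → E → ℝ) : EReal :=
  (Benergy M p N ρ F : EReal) + (μ : EReal) * Jbar M p N ρ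

/-- Connectivity of the graph of cells induced by the internal edges. -/
def MeshConnected (M : Mesh T E) : Prop :=
  ∀ K L : T, Relation.ReflTransGen
    (fun a b => ∃ σ, (M.e1 σ = a ∧ M.e2 σ = b) ∨ (M.e1 σ = b ∧ M.e2 σ = a)) K L

end OTFV

open OTFV

section Aux

open scoped ENNReal

/-- A lower semicontinuous `ℝ≥0∞`-valued function attains its minimum on a
nonempty compact set (in a T2 space). -/
theorem OTFV.lsc_exists_min {X : Type*} [TopologicalSpace X] [T2Space X] {s : Set X}
    (hs : IsCompact s) (hne : s.Nonempty) {f : X → ℝ≥0∞} (hf : LowerSemicontinuous f) :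
    ∃ x ∈ s, ∀ y ∈ s, f x ≤ f y := by
  set m := ⨅ y ∈ s, f y with hm
  by_cases hmt : m = ⊤
  · obtain ⟨x, hx⟩ := hne
    refine ⟨x, hx, fun y hy => ?_⟩
    have : m ≤ f y := biInf_le f hy
    rw [hmt, top_le_iff] at this
    simp [this]
  · have hcl : IsClosed s := hs.isClosed
    set t : {b : ℝ≥0∞ // m < b} → Set X := fun b => s ∩ f ⁻¹' Set.Iic b.1 with ht
    have hnei : Nonempty {b : ℝ≥0∞ // m < b} := ⟨⟨⊤, lt_top_iff_ne_top.2 hmt⟩⟩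
    have hdir : Directed (fun x1 x2 => x1 ⊇ x2) t := by
      intro b c
      refine ⟨⟨min b.1 c.1, lt_min b.2 c.2⟩, ?_, ?_⟩
      · exact Set.inter_subset_inter_right _
          (Set.preimage_mono (Set.Iic_subset_Iic.2 (min_le_left _ _)))
      · exact Set.inter_subset_inter_right _
          (Set.preimage_mono (Set.Iic_subset_Iic.2 (min_le_right _ _)))
    have hnonempty : ∀ b, (t b).Nonempty := by
      rintro ⟨b, hb⟩
      have : ⨅ y ∈ s, f y < b := hb
      rw [iInf_lt_iff] at this
      obtain ⟨y, hy⟩ := this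
      rw [iInf_lt_iff] at hy
      obtain ⟨hys, hyb⟩ := hy
      exact ⟨y, hys, le_of_lt hyb⟩
    have hcomp : ∀ b, IsCompact (t b) :=
      fun b => hs.inter_right ((hf.isClosed_preimage b.1))
    have hclosed : ∀ b, IsClosed (t b) :=
      fun b => hcl.inter (hf.isClosed_preimage b.1)
    obtain ⟨x, hx⟩ := IsCompact.nonempty_iInter_of_directed_nonempty_isCompact_isClosed
      t hdir hnonempty hcomp hclosed
    simp only [Set.mem_iInter] at hx
    have hxs : x ∈ s := (hx ⟨⊤, lt_top_iff_ne_top.2 hmt⟩).1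
    refine ⟨x, hxs, fun y hy => ?_⟩
    have hfxm : f x ≤ m := by
      by_contra h
      push_neg at h
      obtain ⟨c, hc1, hc2⟩ := exists_between h
      exact absurd ((hx ⟨c, hc1⟩).2 : f x ≤ c) (not_le.2 hc2)
    exact hfxm.trans (biInf_le f hy)

theorem OTFV.Bact_eq_iSup (p q : ℝ) :
    Bact p q = ⨆ a : ℝ, ENNReal.ofReal (a * q - a ^ 2 * p / 2) := by
  unfold Bact
  by_cases hp : 0 < p
  · rw [if_pos hp]
    apply le_antisymm
    · refine le_iSup_of_le (q / p) (ENNReal.ofReal_le_ofReal (le_of_eq ?_))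
      field_simp
      ring
    · refine iSup_le fun a => ENNReal.ofReal_le_ofReal ?_
      rw [le_div_iff₀ (by positivity : (0:ℝ) < 2 * p)]
      nlinarith [sq_nonneg (q - a * p)]
  · by_cases h0 : p = 0 ∧ q = 0
    · rw [if_neg hp, if_pos h0]
      obtain ⟨h1, h2⟩ := h0
      subst h1; subst h2
      simp
    · rw [if_neg hp, if_neg h0]
      symm
      rw [iSup_eq_top]
      intro b hb
      suffices h : ∃ a : ℝ, b.toReal < a * q - a ^ 2 * p / 2 by
        obtain ⟨a, ha⟩ := h
        exact ⟨a, (ENNReal.lt_ofReal_iff_toReal_lt hb.ne).2 ha⟩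
      set r := b.toReal
      rcases eq_or_lt_of_le (not_lt.1 hp) with hpe | hpn
      · have hq : q ≠ 0 := fun hq => h0 ⟨hpe, hq⟩
        refine ⟨(max r 0 + 1) / q, ?_⟩
        rw [hpe]
        rw [div_mul_cancel₀ _ hq]
        have := le_max_left r 0
        simp only [mul_zero, zero_div, sub_zero]
        linarith
      · set a := max ((|q| + 1) / (-p / 2)) (max (r + 1) 1) with ha
        have hc : (0:ℝ) < -p / 2 := by linarith
        have ha1 : (|q| + 1) / (-p / 2) ≤ a := le_max_left _ _
        have ha2 : r + 1 ≤ a := le_trans (le_max_left _ _) (le_max_right _ _)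
        have ha3 : (1:ℝ) ≤ a := le_trans (le_max_right _ _) (le_max_right _ _)
        have hac : |q| + 1 ≤ a * (-p / 2) := (div_le_iff₀ hc).1 ha1
        have hq' : -|q| ≤ q := neg_abs_le q
        have ha0 : (0:ℝ) ≤ a := le_trans zero_le_one ha3
        refine ⟨a, ?_⟩
        nlinarith [mul_le_mul_of_nonneg_left hq' ha0, mul_le_mul_of_nonneg_left hac ha0]

theorem OTFV.lsc_Bact_comp {X : Type*} [TopologicalSpace X] {A B : X → ℝ}
    (hA : Continuous A) (hB : Continuous B) :
    LowerSemicontinuous fun x => Bact (A x) (B x) := by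
  have h : (fun x => Bact (A x) (B x)) =
      fun x => ⨆ a : ℝ, ENNReal.ofReal (a * B x - a ^ 2 * A x / 2) :=
    funext fun x => Bact_eq_iSup _ _
  rw [h]
  exact lowerSemicontinuous_iSup fun a =>
    (ENNReal.continuous_ofReal.comp (by fun_prop)).lowerSemicontinuous

theorem OTFV.LowerSemicontinuous.ennreal_mul_const {X : Type*} [TopologicalSpace X]
    {f : X → ℝ≥0∞} (hf : LowerSemicontinuous f) {c : ℝ≥0∞} (hc : c ≠ ⊤) :
    LowerSemicontinuous fun x => f x * c :=
  (ENNReal.continuous_mul_const hc).comp_lowerSemicontinuous hf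
    (fun a b hab => mul_le_mul_left hab c)

theorem OTFV.LowerSemicontinuous.ennreal_const_mul {X : Type*} [TopologicalSpace X]
    {f : X → ℝ≥0∞} (hf : LowerSemicontinuous f) {c : ℝ≥0∞} (hc : c ≠ ⊤) :
    LowerSemicontinuous fun x => c * f x :=
  (ENNReal.continuous_const_mul hc).comp_lowerSemicontinuous hf
    (fun a b hab => mul_le_mul_right hab c)

end Aux
section Aux2

open scoped ENNReal
open Finset

variable {T T' E : Type*} [Fintype T] [Fintype T'] [Fintype E] [DecidableEq T] [DecidableEq T']

theorem OTFV.Benergy_decomp (M : Mesh T E) (p : T → T') (N : ℕ)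
    (ρ : Fin (N+2) → T' → ℝ) (F : Fin (N+1) → E → ℝ) :
    Benergy M p N ρ F =
      (∑ k : Fin (N+1), ENNReal.ofReal ((1:ℝ)/(N+1)) *
        ∑ σ, Bact (linRec M (inj p (fun K' => (ρ k.succ K' + ρ k.castSucc K') / 2)) σ) (F k σ) *
          ENNReal.ofReal (M.mS σ * M.dS σ))
      + ∑ k : Fin (N+2), ∑ K', (if 0 ≤ ρ k K' then (0:ℝ≥0∞) else ⊤) := by
  unfold Benergy
  by_cases h : ∀ k K', 0 ≤ ρ k K'
  · rw [if_pos h]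
    have h2 : ∀ k ∈ (univ : Finset (Fin (N+2))),
        (∑ K', (if 0 ≤ ρ k K' then (0:ℝ≥0∞) else ⊤)) = 0 :=
      fun k _ => Finset.sum_eq_zero fun K' _ => if_pos (h k K')
    rw [Finset.sum_eq_zero h2, add_zero]
  · rw [if_neg h]
    push_neg at h
    obtain ⟨k, K', hk⟩ := h
    have h2 : (∑ k : Fin (N+2), ∑ K', (if 0 ≤ ρ k K' then (0:ℝ≥0∞) else ⊤)) = ⊤ := by
      rw [ENNReal.sum_eq_top]
      refine ⟨k, Finset.mem_univ _, ?_⟩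
      rw [ENNReal.sum_eq_top]
      exact ⟨K', Finset.mem_univ _, if_neg (not_le.2 hk)⟩
    rw [h2, add_top]

theorem OTFV.lsc_Benergy (M : Mesh T E) (p : T → T') (N : ℕ) :
    LowerSemicontinuous
      (fun x : (Fin (N+2) → T' → ℝ) × (Fin (N+1) → E → ℝ) => Benergy M p N x.1 x.2) := by
  have hrw : (fun x : (Fin (N+2) → T' → ℝ) × (Fin (N+1) → E → ℝ) => Benergy M p N x.1 x.2) =
      fun x =>
      (∑ k : Fin (N+1), ENNReal.ofReal ((1:ℝ)/(N+1)) *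
        ∑ σ, Bact (linRec M (inj p (fun K' => (x.1 k.succ K' + x.1 k.castSucc K') / 2)) σ)
            (x.2 k σ) * ENNReal.ofReal (M.mS σ * M.dS σ))
      + ∑ k : Fin (N+2), ∑ K', (if 0 ≤ x.1 k K' then (0:ℝ≥0∞) else ⊤) :=
    funext fun x => Benergy_decomp M p N x.1 x.2
  rw [hrw]
  apply LowerSemicontinuous.add
  · apply lowerSemicontinuous_sum; intro k _
    apply LowerSemicontinuous.ennreal_const_mul _ ENNReal.ofReal_ne_top
    apply lowerSemicontinuous_sum; intro σ _
    apply LowerSemicontinuous.ennreal_mul_const _ ENNReal.ofReal_ne_top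
    apply lsc_Bact_comp
    · simp only [linRec, inj]; fun_prop
    · fun_prop
  · apply lowerSemicontinuous_sum; intro k _
    apply lowerSemicontinuous_sum; intro K' _
    have hg0 : LowerSemicontinuous (fun t : ℝ => if 0 ≤ t then (0:ℝ≥0∞) else ⊤) := by
      rw [lowerSemicontinuous_iff_isClosed_preimage]
      intro y
      by_cases hy : y = ⊤
      · have h1 : (fun t : ℝ => if 0 ≤ t then (0:ℝ≥0∞) else ⊤) ⁻¹' Set.Iic y = Set.univ := by
          ext t; simp [hy]
        rw [h1]; exact isClosed_univ
      · have h1 : (fun t : ℝ => if 0 ≤ t then (0:ℝ≥0∞) else ⊤) ⁻¹' Set.Iic y = Set.Ici 0 := by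
          ext t
          simp only [Set.mem_preimage, Set.mem_Iic, Set.mem_Ici]
          split_ifs with h
          · simp [h]
          · simp [h, hy, top_le_iff]
        rw [h1]; exact isClosed_Ici
    exact LowerSemicontinuous.comp (g := fun x : (Fin (N+2) → T' → ℝ) × (Fin (N+1) → E → ℝ) => x.1 k K') hg0 (by fun_prop)

end Aux2
section Aux3

open scoped ENNReal
open Finset

variable {T T' E : Type*} [Fintype T] [Fintype T'] [Fintype E] [DecidableEq T] [DecidableEq T']

theorem OTFV.isClosed_Cset (M : Mesh T E) (p : T → T') (N : ℕ) (ρin ρf : T' → ℝ) :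
    IsClosed (Cset M p N ρin ρf) := by
  have hdiv : ∀ (k : Fin (N+1)) (K : T),
      Continuous (fun x : (Fin (N+2) → T' → ℝ) × (Fin (N+1) → E → ℝ) => divT M (x.2 k) K) := by
    intro k K
    unfold divT
    have hc : ∀ σ : E, Continuous (fun x : (Fin (N+2) → T' → ℝ) × (Fin (N+1) → E → ℝ) =>
        ((if M.e1 σ = K then x.2 k σ else 0) + (if M.e2 σ = K then -(x.2 k σ) else 0)) * M.mS σ) := by
      intro σ
      by_cases h1 : M.e1 σ = K <;> by_cases h2 : M.e2 σ = K <;> simp only [h1, h2, if_pos, if_neg,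
        if_true, if_false, not_false_iff] <;> fun_prop
    exact (continuous_finset_sum _ (fun σ _ => hc σ)).div_const _
  have h1 : IsClosed {x : (Fin (N+2) → T' → ℝ) × (Fin (N+1) → E → ℝ) | x.1 0 = ρin} :=
    isClosed_eq ((continuous_apply 0).comp continuous_fst) continuous_const
  have h2 : IsClosed {x : (Fin (N+2) → T' → ℝ) × (Fin (N+1) → E → ℝ) |
      x.1 (Fin.last (N+1)) = ρf} :=
    isClosed_eq ((continuous_apply _).comp continuous_fst) continuous_const
  have h3 : IsClosed {x : (Fin (N+2) → T' → ℝ) × (Fin (N+1) → E → ℝ) | ContEq M p N x.1 x.2} := by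
    have : {x : (Fin (N+2) → T' → ℝ) × (Fin (N+1) → E → ℝ) | ContEq M p N x.1 x.2} =
        ⋂ (k : Fin (N+1)), ⋂ (K : T),
          {x : (Fin (N+2) → T' → ℝ) × (Fin (N+1) → E → ℝ) |
            (x.1 k.succ (p K) - x.1 k.castSucc (p K)) / ((1:ℝ)/(N+1)) + divT M (x.2 k) K = 0} := by
      ext x; simp [ContEq, Set.mem_iInter]
    rw [this]
    refine isClosed_iInter fun k => isClosed_iInter fun K => isClosed_eq ?_ continuous_const
    apply Continuous.add _ (hdiv k K)
    apply Continuous.div_const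
    exact (Continuous.sub (by fun_prop : Continuous fun x : (Fin (N+2) → T' → ℝ) × (Fin (N+1) → E → ℝ) => x.1 k.succ (p K))
      (by fun_prop : Continuous fun x : (Fin (N+2) → T' → ℝ) × (Fin (N+1) → E → ℝ) => x.1 k.castSucc (p K)))
  have : Cset M p N ρin ρf = {x | x.1 0 = ρin} ∩ ({x | x.1 (Fin.last (N+1)) = ρf} ∩
      {x | ContEq M p N x.1 x.2}) := by
    ext x; simp [Cset, Set.mem_inter_iff, and_assoc]
  rw [this]
  exact h1.inter (h2.inter h3)

/-- Sum of the divergence against cell masses vanishes. -/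
theorem OTFV.sum_divT (M : Mesh T E) (F : E → ℝ) :
    ∑ K, divT M F K * M.m K = 0 := by
  have h1 : ∀ K, divT M F K * M.m K =
      ∑ σ, ((if M.e1 σ = K then F σ else 0) + (if M.e2 σ = K then -F σ else 0)) * M.mS σ :=
    fun K => div_mul_cancel₀ _ (M.m_pos K).ne'
  rw [Finset.sum_congr rfl (fun K _ => h1 K), Finset.sum_comm]
  apply Finset.sum_eq_zero; intro σ _
  rw [← Finset.sum_mul]
  have h2 : ∑ K, ((if M.e1 σ = K then F σ else 0) + (if M.e2 σ = K then -F σ else 0)) = 0 := by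
    rw [Finset.sum_add_distrib]
    simp [Finset.sum_ite_eq]
  rw [h2, zero_mul]

/-- Mass conservation along a solution of the discrete continuity equation. -/
theorem OTFV.mass_conserved (M : Mesh T E) (p : T → T') (N : ℕ) (ρin ρf : T' → ℝ)
    (x : (Fin (N+2) → T' → ℝ) × (Fin (N+1) → E → ℝ)) (hx : x ∈ Cset M p N ρin ρf) :
    ∀ k : Fin (N+2), ∑ K, x.1 k (p K) * M.m K = ∑ K, ρin (p K) * M.m K := by
  intro k
  induction k using Fin.induction with
  | zero => rw [hx.1]
  | succ k ih =>
    have hτ : ((1:ℝ)/(N+1)) ≠ 0 := by positivity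
    have hstep : ∀ K, x.1 k.succ (p K) =
        x.1 k.castSucc (p K) - ((1:ℝ)/(N+1)) * divT M (x.2 k) K := by
      intro K
      have := hx.2.2 k K
      field_simp at this ⊢
      linarith
    calc ∑ K, x.1 k.succ (p K) * M.m K
        = ∑ K, (x.1 k.castSucc (p K) * M.m K
            - ((1:ℝ)/(N+1)) * (divT M (x.2 k) K * M.m K)) := by
          apply Finset.sum_congr rfl; intro K _; rw [hstep K]; ring
      _ = ∑ K, x.1 k.castSucc (p K) * M.m K
            - ((1:ℝ)/(N+1)) * ∑ K, divT M (x.2 k) K * M.m K := by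
          rw [Finset.sum_sub_distrib, Finset.mul_sum]
      _ = ∑ K, ρin (p K) * M.m K := by rw [sum_divT, mul_zero, sub_zero, ih]

end Aux3
section Aux4

open scoped ENNReal
open Finset

variable {T T' E : Type*} [Fintype T] [Fintype T'] [Fintype E] [DecidableEq T] [DecidableEq T']

open Classical in
/-- Clamp the values of a discrete curve outside the range of `p`. -/
noncomputable def OTFV.clampR (p : T → T') (N : ℕ) (ρin ρf : T' → ℝ)
    (ρ : Fin (N+2) → T' → ℝ) : Fin (N+2) → T' → ℝ :=
  fun k K' => if ∃ K, p K = K' then ρ k K'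
    else if k = 0 then ρin K' else if k = Fin.last (N+1) then ρf K' else 0

theorem OTFV.clampR_comp (p : T → T') (N : ℕ) (ρin ρf : T' → ℝ)
    (ρ : Fin (N+2) → T' → ℝ) (k : Fin (N+2)) (K : T) :
    clampR p N ρin ρf ρ k (p K) = ρ k (p K) := by
  unfold clampR; rw [if_pos ⟨K, rfl⟩]

theorem OTFV.clampR_nonneg (p : T → T') (N : ℕ) {ρin ρf : T' → ℝ}
    (hin : ∀ K', 0 ≤ ρin K') (hf : ∀ K', 0 ≤ ρf K') {ρ : Fin (N+2) → T' → ℝ}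
    (hnn : ∀ k K', 0 ≤ ρ k K') : ∀ k K', 0 ≤ clampR p N ρin ρf ρ k K' := by
  intro k K'
  unfold clampR
  split_ifs
  · exact hnn k K'
  · exact hin K'
  · exact hf K'
  · exact le_refl 0

theorem OTFV.clampR_inj (p : T → T') (N : ℕ) (ρin ρf : T' → ℝ)
    (ρ : Fin (N+2) → T' → ℝ) (k : Fin (N+1)) :
    inj p (fun K' => (clampR p N ρin ρf ρ k.succ K' + clampR p N ρin ρf ρ k.castSucc K') / 2) =
      inj p (fun K' => (ρ k.succ K' + ρ k.castSucc K') / 2) := by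
  funext K
  simp only [inj, clampR_comp]

theorem OTFV.clampR_mem_Cset (M : Mesh T E) (p : T → T') (N : ℕ) (ρin ρf : T' → ℝ)
    (x : (Fin (N+2) → T' → ℝ) × (Fin (N+1) → E → ℝ)) (hx : x ∈ Cset M p N ρin ρf) :
    (clampR p N ρin ρf x.1, x.2) ∈ Cset M p N ρin ρf := by
  refine ⟨?_, ?_, ?_⟩
  · funext K'
    show clampR p N ρin ρf x.1 0 K' = ρin K'
    unfold clampR
    by_cases h : ∃ K, p K = K'
    · rw [if_pos h]
      exact congrFun hx.1 K'
    · rw [if_neg h, if_pos rfl]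
  · funext K'
    show clampR p N ρin ρf x.1 (Fin.last (N+1)) K' = ρf K'
    unfold clampR
    by_cases h : ∃ K, p K = K'
    · rw [if_pos h]
      exact congrFun hx.2.1 K'
    · have h0 : (Fin.last (N+1)) ≠ 0 := by
        simp [Fin.ext_iff]
      rw [if_neg h, if_neg h0, if_pos rfl]
  · intro k K
    show (clampR p N ρin ρf x.1 k.succ (p K) - clampR p N ρin ρf x.1 k.castSucc (p K)) /
        ((1:ℝ)/(N+1)) + divT M (x.2 k) K = 0
    rw [clampR_comp, clampR_comp]
    exact hx.2.2 k K

theorem OTFV.clampR_energy_le (M : Mesh T E) (p : T → T') (N : ℕ) {ρin ρf : T' → ℝ}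
    (hin : ∀ K', 0 ≤ ρin K') (hf : ∀ K', 0 ≤ ρf K')
    (ρ : Fin (N+2) → T' → ℝ) (F : Fin (N+1) → E → ℝ) :
    Benergy M p N (clampR p N ρin ρf ρ) F ≤ Benergy M p N ρ F := by
  by_cases h : ∀ k K', 0 ≤ ρ k K'
  · have h' := clampR_nonneg p N hin hf h
    unfold Benergy
    rw [if_pos h, if_pos h']
    apply le_of_eq
    refine Finset.sum_congr rfl fun k _ => ?_
    congr 1
    refine Finset.sum_congr rfl fun σ _ => ?_
    rw [clampR_inj]
  · unfold Benergy
    rw [if_neg h]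
    exact le_top

/-- The uniform bound on the density values. -/
noncomputable def OTFV.Cbound (M : Mesh T E) (p : T → T') (ρin ρf : T' → ℝ) : ℝ :=
  (∑ K : T, (∑ L : T, ρin (p L) * M.m L) / M.m K) + ((∑ K', |ρin K'|) + ∑ K', |ρf K'|)

theorem OTFV.Cbound_nonneg (M : Mesh T E) (p : T → T') {ρin : T' → ℝ} (ρf : T' → ℝ)
    (hin : ∀ K', 0 ≤ ρin K') : 0 ≤ Cbound M p ρin ρf := by
  unfold Cbound
  have h1 : 0 ≤ ∑ L : T, ρin (p L) * M.m L :=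
    Finset.sum_nonneg fun L _ => mul_nonneg (hin _) (M.m_pos L).le
  have h2 : 0 ≤ ∑ K : T, (∑ L : T, ρin (p L) * M.m L) / M.m K :=
    Finset.sum_nonneg fun K _ => div_nonneg h1 (M.m_pos K).le
  have h3 : 0 ≤ ∑ K', |ρin K'| := Finset.sum_nonneg fun _ _ => abs_nonneg _
  have h4 : 0 ≤ ∑ K', |ρf K'| := Finset.sum_nonneg fun _ _ => abs_nonneg _
  linarith

theorem OTFV.clampR_bound (M : Mesh T E) (p : T → T') (N : ℕ) {ρin ρf : T' → ℝ}
    (hin : ∀ K', 0 ≤ ρin K') (hf : ∀ K', 0 ≤ ρf K')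
    (x : (Fin (N+2) → T' → ℝ) × (Fin (N+1) → E → ℝ)) (hx : x ∈ Cset M p N ρin ρf)
    (hnn : ∀ k K', 0 ≤ x.1 k K') :
    ∀ k K', clampR p N ρin ρf x.1 k K' ∈ Set.Icc 0 (Cbound M p ρin ρf) := by
  have h1 : 0 ≤ ∑ L : T, ρin (p L) * M.m L :=
    Finset.sum_nonneg fun L _ => mul_nonneg (hin _) (M.m_pos L).le
  have h2 : 0 ≤ ∑ K : T, (∑ L : T, ρin (p L) * M.m L) / M.m K :=
    Finset.sum_nonneg fun K _ => div_nonneg h1 (M.m_pos K).le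
  have h3 : 0 ≤ ∑ K', |ρin K'| := Finset.sum_nonneg fun _ _ => abs_nonneg _
  have h4 : 0 ≤ ∑ K', |ρf K'| := Finset.sum_nonneg fun _ _ => abs_nonneg _
  intro k K'
  refine ⟨clampR_nonneg p N hin hf hnn k K', ?_⟩
  unfold clampR
  by_cases h : ∃ K, p K = K'
  · rw [if_pos h]
    obtain ⟨K₀, rfl⟩ := h
    have hm := mass_conserved M p N ρin ρf x hx k
    have hle : x.1 k (p K₀) * M.m K₀ ≤ ∑ K, x.1 k (p K) * M.m K :=
      Finset.single_le_sum (fun K _ => mul_nonneg (hnn k _) (M.m_pos K).le) (Finset.mem_univ K₀)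
    rw [hm] at hle
    have hdiv : x.1 k (p K₀) ≤ (∑ L : T, ρin (p L) * M.m L) / M.m K₀ :=
      (le_div_iff₀ (M.m_pos K₀)).2 hle
    have hsum : (∑ L : T, ρin (p L) * M.m L) / M.m K₀ ≤
        ∑ K : T, (∑ L : T, ρin (p L) * M.m L) / M.m K :=
      Finset.single_le_sum (fun K _ => div_nonneg h1 (M.m_pos K).le) (Finset.mem_univ K₀)
    unfold Cbound
    linarith
  · rw [if_neg h]
    have habs1 : ρin K' ≤ ∑ J, |ρin J| :=
      (le_abs_self _).trans (Finset.single_le_sum (fun J _ => abs_nonneg (ρin J))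
        (Finset.mem_univ K'))
    have habs2 : ρf K' ≤ ∑ J, |ρf J| :=
      (le_abs_self _).trans (Finset.single_le_sum (fun J _ => abs_nonneg (ρf J))
        (Finset.mem_univ K'))
    unfold Cbound
    split_ifs <;> linarith

end Aux4
section Aux5

open scoped ENNReal
open Finset

variable {T T' E : Type*} [Fintype T] [Fintype T'] [Fintype E] [DecidableEq T] [DecidableEq T']

theorem OTFV.flux_bound (M : Mesh T E) (p : T → T') (N : ℕ) {ρin ρf : T' → ℝ}
    (hin : ∀ K', 0 ≤ ρin K') {B0 : ℝ≥0∞} (hB0 : B0 ≠ ⊤)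
    (x : (Fin (N+2) → T' → ℝ) × (Fin (N+1) → E → ℝ))
    (hnn : ∀ k K', 0 ≤ x.1 k K') (hub : ∀ k K', x.1 k K' ≤ Cbound M p ρin ρf)
    (hE : Benergy M p N x.1 x.2 ≤ B0) :
    ∀ (k : Fin (N+1)) (σ : E), (x.2 k σ) ^ 2 ≤
      2 * Cbound M p ρin ρf * B0.toReal * (N+1) / (M.mS σ * M.dS σ) := by
  intro k σ
  set C := Cbound M p ρin ρf with hC
  have hC0 : 0 ≤ C := Cbound_nonneg M p ρf hin
  have hb0 : 0 ≤ B0.toReal := ENNReal.toReal_nonneg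
  have hmd : 0 < M.mS σ * M.dS σ := mul_pos (M.mS_pos σ) (M.dS_pos σ)
  have hτ : 0 < (1:ℝ)/(N+1) := by positivity
  -- the edge density value
  set q := linRec M (inj p (fun K' => (x.1 k.succ K' + x.1 k.castSucc K') / 2)) σ with hq
  have hw : M.d1 σ / M.dS σ + M.d2 σ / M.dS σ = 1 := by
    rw [← add_div, M.d_sum, div_self (M.dS_pos σ).ne']
  have hw1 : 0 ≤ M.d1 σ / M.dS σ := div_nonneg (M.d1_pos σ).le (M.dS_pos σ).le
  have hw2 : 0 ≤ M.d2 σ / M.dS σ := div_nonneg (M.d2_pos σ).le (M.dS_pos σ).le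
  have hv1 : 0 ≤ (x.1 k.succ (p (M.e1 σ)) + x.1 k.castSucc (p (M.e1 σ))) / 2 ∧
      (x.1 k.succ (p (M.e1 σ)) + x.1 k.castSucc (p (M.e1 σ))) / 2 ≤ C := by
    constructor
    · have := hnn k.succ (p (M.e1 σ)); have := hnn k.castSucc (p (M.e1 σ)); linarith
    · have := hub k.succ (p (M.e1 σ)); have := hub k.castSucc (p (M.e1 σ)); linarith
  have hv2 : 0 ≤ (x.1 k.succ (p (M.e2 σ)) + x.1 k.castSucc (p (M.e2 σ))) / 2 ∧
      (x.1 k.succ (p (M.e2 σ)) + x.1 k.castSucc (p (M.e2 σ))) / 2 ≤ C := by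
    constructor
    · have := hnn k.succ (p (M.e2 σ)); have := hnn k.castSucc (p (M.e2 σ)); linarith
    · have := hub k.succ (p (M.e2 σ)); have := hub k.castSucc (p (M.e2 σ)); linarith
  have hq0 : 0 ≤ q := by
    rw [hq]
    unfold linRec inj
    exact add_nonneg (mul_nonneg hw1 hv1.1) (mul_nonneg hw2 hv2.1)
  have hqC : q ≤ C := by
    rw [hq]
    unfold linRec inj
    nlinarith [hv1.2, hv2.2, hw1, hw2, hw]
  -- extract the single-term bound from the energy bound
  have hsingle : ENNReal.ofReal ((1:ℝ)/(N+1)) *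
      (Bact q (x.2 k σ) * ENNReal.ofReal (M.mS σ * M.dS σ)) ≤ B0 := by
    have hE' : Benergy M p N x.1 x.2 =
        ∑ j : Fin (N+1), ENNReal.ofReal ((1:ℝ)/(N+1)) *
          ∑ τ', Bact (linRec M (inj p (fun K' => (x.1 j.succ K' + x.1 j.castSucc K') / 2)) τ')
            (x.2 j τ') * ENNReal.ofReal (M.mS τ' * M.dS τ') := by
      unfold Benergy; rw [if_pos hnn]
    have h1 : ENNReal.ofReal ((1:ℝ)/(N+1)) *
        ∑ τ', Bact (linRec M (inj p (fun K' => (x.1 k.succ K' + x.1 k.castSucc K') / 2)) τ')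
          (x.2 k τ') * ENNReal.ofReal (M.mS τ' * M.dS τ') ≤ B0 := by
      refine le_trans (Finset.single_le_sum (f := fun j : Fin (N+1) =>
        ENNReal.ofReal ((1:ℝ)/(N+1)) *
          ∑ τ', Bact (linRec M (inj p (fun K' => (x.1 j.succ K' + x.1 j.castSucc K') / 2)) τ')
            (x.2 j τ') * ENNReal.ofReal (M.mS τ' * M.dS τ'))
        (fun j _ => zero_le) (Finset.mem_univ k)) ?_
      rw [← hE']
      exact hE
    refine le_trans ?_ h1
    apply mul_le_mul_right
    exact Finset.single_le_sum (f := fun τ' : E =>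
      Bact (linRec M (inj p (fun K' => (x.1 k.succ K' + x.1 k.castSucc K') / 2)) τ')
        (x.2 k τ') * ENNReal.ofReal (M.mS τ' * M.dS τ'))
      (fun τ' _ => zero_le) (Finset.mem_univ σ)
  rcases eq_or_lt_of_le hq0 with hq0' | hqpos
  · -- q = 0 : the flux must vanish
    have hbact : Bact q (x.2 k σ) = if x.2 k σ = 0 then 0 else ⊤ := by
      unfold Bact
      rw [← hq0']
      simp
    by_cases hF : x.2 k σ = 0
    · rw [hF]
      have h0 : (0:ℝ) ^ 2 = 0 := by norm_num
      rw [h0]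
      apply div_nonneg _ hmd.le
      have hN1 : (0:ℝ) ≤ (N:ℝ) + 1 := by positivity
      have := mul_nonneg (mul_nonneg (mul_nonneg (by norm_num : (0:ℝ) ≤ 2) hC0) hb0) hN1
      linarith
    · rw [hbact, if_neg hF] at hsingle
      rw [ENNReal.top_mul (ENNReal.ofReal_pos.2 hmd).ne',
        ENNReal.mul_top (ENNReal.ofReal_pos.2 hτ).ne'] at hsingle
      exact absurd (top_le_iff.1 hsingle) hB0
  · -- q > 0
    have hbact : Bact q (x.2 k σ) = ENNReal.ofReal ((x.2 k σ) ^ 2 / (2 * q)) := by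
      unfold Bact; rw [if_pos hqpos]
    rw [hbact, ← ENNReal.ofReal_mul (by positivity : (0:ℝ) ≤ (x.2 k σ) ^ 2 / (2 * q)),
      ← ENNReal.ofReal_mul hτ.le] at hsingle
    have hreal : (1:ℝ)/(N+1) * ((x.2 k σ) ^ 2 / (2 * q) * (M.mS σ * M.dS σ)) ≤ B0.toReal :=
      (ENNReal.ofReal_le_iff_le_toReal hB0).1 hsingle
    rw [le_div_iff₀ hmd]
    have hN1 : (0:ℝ) < (N:ℝ) + 1 := by positivity
    have h2 : (x.2 k σ) ^ 2 * (M.mS σ * M.dS σ) ≤ B0.toReal * ((N+1) * (2 * q)) := by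
      have := mul_le_mul_of_nonneg_right hreal (by positivity : (0:ℝ) ≤ (N+1) * (2 * q))
      calc (x.2 k σ) ^ 2 * (M.mS σ * M.dS σ)
          = (1:ℝ)/(N+1) * ((x.2 k σ) ^ 2 / (2 * q) * (M.mS σ * M.dS σ)) * ((N+1) * (2 * q)) := by
            field_simp
        _ ≤ B0.toReal * ((N+1) * (2 * q)) := this
    nlinarith [mul_le_mul_of_nonneg_left hqC (by positivity : (0:ℝ) ≤ 2 * B0.toReal * (N+1))]

end Aux5
theorem exists_minimizer
    {T T' E : Type*} [Fintype T] [Fintype T'] [Fintype E] [DecidableEq T] [DecidableEq T']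
    (M : Mesh T E) (p : T → T') (N : ℕ) (ρin ρf : T' → ℝ)
    (hin : ∀ K', 0 ≤ ρin K') (hf : ∀ K', 0 ≤ ρf K')
    (hmass : ∑ K', ρin K' * coarseM M p K' = ∑ K', ρf K' * coarseM M p K')
    (xh : (Fin (N+2) → T' → ℝ) × (Fin (N+1) → E → ℝ))
    (hxh : xh ∈ Cset M p N ρin ρf) (hfin : Benergy M p N xh.1 xh.2 ≠ ⊤) :
    ∃ x ∈ Cset M p N ρin ρf, Benergy M p N x.1 x.2 ≠ ⊤ ∧
      ∀ y ∈ Cset M p N ρin ρf, Benergy M p N x.1 x.2 ≤ Benergy M p N y.1 y.2 := by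
  classical
  set C := Cbound M p ρin ρf with hC
  set B0 := Benergy M p N xh.1 xh.2 with hB0def
  set D : E → ℝ := fun σ => 2 * C * B0.toReal * (N+1) / (M.mS σ * M.dS σ) with hD
  set box : Set ((Fin (N+2) → T' → ℝ) × (Fin (N+1) → E → ℝ)) :=
    (Set.univ.pi fun _ : Fin (N+2) => Set.univ.pi fun _ : T' => Set.Icc (0:ℝ) C) ×ˢ
    (Set.univ.pi fun _ : Fin (N+1) => Set.univ.pi fun σ : E =>
      Set.Icc (-Real.sqrt (D σ)) (Real.sqrt (D σ))) with hbox
  have hcompact : IsCompact box :=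
    (isCompact_univ_pi fun _ => isCompact_univ_pi fun _ => isCompact_Icc).prod
      (isCompact_univ_pi fun _ => isCompact_univ_pi fun _ => isCompact_Icc)
  have hclosedC := OTFV.isClosed_Cset M p N ρin ρf
  set S := box ∩ Cset M p N ρin ρf with hS
  have hScompact : IsCompact S := hcompact.inter_right hclosedC
  have hkey : ∀ y : (Fin (N+2) → T' → ℝ) × (Fin (N+1) → E → ℝ), y ∈ Cset M p N ρin ρf →
      Benergy M p N y.1 y.2 ≠ ⊤ →
      Benergy M p N (OTFV.clampR p N ρin ρf y.1) y.2 ≤ B0 →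
      (OTFV.clampR p N ρin ρf y.1, y.2) ∈ S := by
    intro y hy hyt hcle
    have hnn : ∀ k K', 0 ≤ y.1 k K' := by
      by_contra h
      exact hyt (by unfold OTFV.Benergy; rw [if_neg h])
    refine ⟨Set.mem_prod.2 ⟨Set.mem_univ_pi.2 fun k => Set.mem_univ_pi.2 fun K' => ?_,
        Set.mem_univ_pi.2 fun k => Set.mem_univ_pi.2 fun σ => ?_⟩,
      OTFV.clampR_mem_Cset M p N ρin ρf y hy⟩
    · exact OTFV.clampR_bound M p N hin hf y hy hnn k K'
    · have hnn' := OTFV.clampR_nonneg p N hin hf hnn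
      have hub : ∀ k K', OTFV.clampR p N ρin ρf y.1 k K' ≤ C :=
        fun k K' => (OTFV.clampR_bound M p N hin hf y hy hnn k K').2
      have hsq := OTFV.flux_bound M p N hin hfin (OTFV.clampR p N ρin ρf y.1, y.2)
        hnn' hub hcle k σ
      have h1 : |y.2 k σ| ≤ Real.sqrt (D σ) := by
        rw [← Real.sqrt_sq_eq_abs]
        exact Real.sqrt_le_sqrt hsq
      exact abs_le.1 h1
  have hxhc : Benergy M p N (OTFV.clampR p N ρin ρf xh.1) xh.2 ≤ B0 :=
    OTFV.clampR_energy_le M p N hin hf xh.1 xh.2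
  have hxhS : (OTFV.clampR p N ρin ρf xh.1, xh.2) ∈ S := hkey xh hxh hfin hxhc
  obtain ⟨x₀, hx₀S, hx₀min⟩ := OTFV.lsc_exists_min hScompact ⟨_, hxhS⟩ (OTFV.lsc_Benergy M p N)
  have hx₀le : Benergy M p N x₀.1 x₀.2 ≤ B0 := (hx₀min _ hxhS).trans hxhc
  refine ⟨x₀, hx₀S.2, ?_, ?_⟩
  · exact ne_top_of_le_ne_top hfin hx₀le
  · intro y hy
    by_cases hyt : Benergy M p N y.1 y.2 = ⊤
    · rw [hyt]; exact le_top
    · have hcle' := OTFV.clampR_energy_le M p N hin hf y.1 y.2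
      by_cases hyB : Benergy M p N (OTFV.clampR p N ρin ρf y.1) y.2 ≤ B0
      · exact (hx₀min _ (hkey y hy hyt hyB)).trans hcle'
      · push_neg at hyB
        exact hx₀le.trans (le_trans (le_of_lt hyB) hcle')
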